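/- Let P ⊆ S² be a finite set contained in a hemisphere (there exists an enclosing spherical circle of radius < π/2). Then the smallest enclosing spherical circle of P is unique: if (c₁, r) and (c₂, r) are both centers/radius of smallest enclosing spherical circles with r < π/2, then c₁ = c₂. -/

import Mathlib

open scoped RealInnerProductSpace
open Real

local notation "E" => EuclideanSpace ℝ (Fin 3)

theorem smallest_enclosing_circle_unique (P : Finset E) (hP : P.Nonempty)
    (hsphere : ∀ x ∈ P, ‖x‖ = 1)
    (c₁ c₂ : E) (hc₁ : ‖c₁‖ = 1) (hc₂ : ‖c₂‖ = 1) (r : ℝ) (hr : r < π / 2)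
    (h₁ : ∀ x ∈ P, Real.arccos ⟪c₁, x⟫ ≤ r)
    (h₂ : ∀ x ∈ P, Real.arccos ⟪c₂, x⟫ ≤ r)
    (hmin : ∀ (c' : E) (r' : ℝ), ‖c'‖ = 1 →
      (∀ x ∈ P, Real.arccos ⟪c', x⟫ ≤ r') → r ≤ r') :
    c₁ = c₂ := by
  by_contra hne
  obtain ⟨x₀, hx₀⟩ := hP
  have hP : P.Nonempty := ⟨x₀, hx₀⟩
  -- r ≥ 0
  have hr0 : 0 ≤ r := le_trans (Real.arccos_nonneg _) (h₁ x₀ hx₀)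
  have hcosr : 0 < Real.cos r := Real.cos_pos_of_mem_Ioo ⟨by linarith [Real.pi_div_two_pos], hr⟩
  -- inner products bounded by Cauchy-Schwarz
  have hinner_le : ∀ (c : E), ‖c‖ = 1 → ∀ x ∈ P, ⟪c, x⟫ ≤ 1 := by
    intro c hc x hx
    have := abs_real_inner_le_norm c x
    rw [hc, hsphere x hx] at this
    simpa using (abs_le.mp this).2
  have hinner_ge : ∀ (c : E), ‖c‖ = 1 → (∀ x ∈ P, Real.arccos ⟪c, x⟫ ≤ r) →
      ∀ x ∈ P, Real.cos r ≤ ⟪c, x⟫ := by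
    intro c hc h x hx
    have h1 : ⟪c, x⟫ ≤ 1 := hinner_le c hc x hx
    have h2 : -1 ≤ ⟪c, x⟫ := by
      have := abs_real_inner_le_norm c x
      rw [hc, hsphere x hx] at this
      simpa using (abs_le.mp this).1
    have := Real.cos_le_cos_of_nonneg_of_le_pi (Real.arccos_nonneg _)
      (by linarith [Real.pi_pos] : r ≤ π) (h x hx)
    rwa [Real.cos_arccos h2 h1] at this
  -- c₁ + c₂ ≠ 0 and ‖c₁ + c₂‖ < 2
  have hip12 : ⟪c₁, c₂⟫ < 1 := (inner_lt_one_iff_real_of_norm_eq_one hc₁ hc₂).mpr hne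
  have hnormsq : ‖c₁ + c₂‖ ^ 2 = 2 + 2 * ⟪c₁, c₂⟫ := by
    rw [← real_inner_self_eq_norm_sq]
    rw [inner_add_add_self, real_inner_self_eq_norm_sq, real_inner_self_eq_norm_sq, hc₁, hc₂,
      real_inner_comm c₂ c₁]
    ring
  have hpos0 : Real.cos r ≤ ⟪c₁, x₀⟫ := hinner_ge c₁ hc₁ h₁ x₀ hx₀
  have hpos0' : Real.cos r ≤ ⟪c₂, x₀⟫ := hinner_ge c₂ hc₂ h₂ x₀ hx₀
  have hsumx : 2 * Real.cos r ≤ ⟪c₁ + c₂, x₀⟫ := by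
    rw [inner_add_left]; linarith
  have hsumne : c₁ + c₂ ≠ 0 := by
    intro h
    rw [h, inner_zero_left] at hsumx
    linarith
  have hs_pos : 0 < ‖c₁ + c₂‖ := norm_pos_iff.mpr hsumne
  have hs_lt : ‖c₁ + c₂‖ < 2 := by
    nlinarith [hnormsq, hs_pos]
  set s := ‖c₁ + c₂‖ with hs
  set m : E := s⁻¹ • (c₁ + c₂) with hm
  have hmnorm : ‖m‖ = 1 := by
    rw [hm, norm_smul, norm_inv, norm_norm, ← hs, inv_mul_cancel₀ (ne_of_gt hs_pos)]
  -- for each x ∈ P, ⟪m, x⟫ > cos r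
  have hkey : ∀ x ∈ P, Real.cos r < ⟪m, x⟫ := by
    intro x hx
    have h1 := hinner_ge c₁ hc₁ h₁ x hx
    have h2 := hinner_ge c₂ hc₂ h₂ x hx
    have : 2 * Real.cos r ≤ ⟪c₁ + c₂, x⟫ := by rw [inner_add_left]; linarith
    have hmx : ⟪m, x⟫ = s⁻¹ * ⟪c₁ + c₂, x⟫ := by
      rw [hm, real_inner_smul_left]
    rw [hmx]
    have hsinv : s⁻¹ > 1/2 := by
      rw [gt_iff_lt, lt_inv_comm₀ (by norm_num) hs_pos]
      simpa using hs_lt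
    calc Real.cos r = (1/2) * (2 * Real.cos r) := by ring
      _ < s⁻¹ * (2 * Real.cos r) := by
          apply mul_lt_mul_of_pos_right hsinv (by linarith)
      _ ≤ s⁻¹ * ⟪c₁ + c₂, x⟫ := by
          apply mul_le_mul_of_nonneg_left this (by positivity)
  -- so arccos ⟪m, x⟫ < r for all x
  have hkey2 : ∀ x ∈ P, Real.arccos ⟪m, x⟫ < r := by
    intro x hx
    have h1 : ⟪m, x⟫ ≤ 1 := hinner_le m hmnorm x hx
    have hlt := hkey x hx
    have := Real.strictAntiOn_arccos
      ⟨Real.neg_one_le_cos r, Real.cos_le_one r⟩ ⟨by linarith [Real.neg_one_le_cos r], h1⟩ hlt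
    rwa [Real.arccos_cos hr0 (by linarith [Real.pi_pos])] at this
  -- take r' = max of arccos over P
  set r' := P.sup' hP (fun x => Real.arccos ⟪m, x⟫) with hr'
  have hr'lt : r' < r := by
    rw [hr', Finset.sup'_lt_iff]
    exact hkey2
  have := hmin m r' hmnorm (fun x hx => Finset.le_sup' (fun x => Real.arccos ⟪m, x⟫) hx)
  linarith
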